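/- Let d ≥ 2 and 1 ≤ m < d be integers, set p_m = 2·log((2m+1)/(2m)) / log((m+1)/m), and let p ∈ [1, p_m]. Let A be a real (d+m)×(d+m) matrix of rank d with all diagonal entries equal to 1. Then E_p(A) = ∑_{i≠j} |A_{ij}|^p ≥ 2m. -/

import Mathlib

open Finset

set_option maxHeartbeats 1000000 in
private lemma key_sum {n : Type*} [Fintype n] [DecidableEq n]
    (P : n → n → ℝ) (M : ℝ)
    (hsym : ∀ i j, P i j = P j i)
    (hoff : ∀ i, (∑ j, if i = j then 0 else (P i j)^2) = P i i - (P i i)^2)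
    (ha0 : ∀ i, 0 ≤ P i i) (hub : ∀ i, P i i ≤ 1)
    (hcs : ∀ i j, (P i j)^2 ≤ P i i * P j j)
    (hcs' : ∀ i j, i ≠ j → (P i j)^2 ≤ (1 - P i i) * (1 - P j j))
    (htr : ∑ i, P i i = M)
    (x : n → n → ℝ) (hx : ∀ i j, 0 ≤ x i j)
    (hxy : M ≤ ∑ i, ∑ j, if i = j then 0 else x i j * |P i j|)
    (p : ℝ) (hp1 : 1 ≤ p) (hp32 : p ≤ 3/2) :
    2*M ≤ ∑ i, ∑ j, if i = j then 0 else (x i j) ^ p := by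
  have hM0 : 0 ≤ M := htr ▸ Finset.sum_nonneg fun i _ => ha0 i
  have hhalf : ∀ i j, i ≠ j → |P i j| ≤ 1/2 := by
    intro i j hij
    have h1 : (P i j)^2 * (P i j)^2 ≤ (P i i * P j j) * ((1 - P i i) * (1 - P j j)) :=
      mul_le_mul (hcs i j) (hcs' i j hij) (sq_nonneg _) (mul_nonneg (ha0 i) (ha0 j))
    have e1 : P i i * (1 - P i i) ≤ 1/4 := by nlinarith [sq_nonneg (P i i - 1/2)]
    have e2 : P j j * (1 - P j j) ≤ 1/4 := by nlinarith [sq_nonneg (P j j - 1/2)]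
    have e3 : 0 ≤ P i i * (1 - P i i) := mul_nonneg (ha0 i) (by linarith [hub i])
    have e4 : 0 ≤ P j j * (1 - P j j) := mul_nonneg (ha0 j) (by linarith [hub j])
    have h2 : (P i i * P j j) * ((1 - P i i) * (1 - P j j)) ≤ 1/16 := by
      have := mul_le_mul e1 e2 e4 (by norm_num : (0:ℝ) ≤ 1/4)
      nlinarith [this]
    have h3 : (P i j)^2 ≤ 1/4 := by nlinarith [sq_nonneg (P i j), h1, h2]
    nlinarith [sq_abs (P i j), abs_nonneg (P i j), h3, sq_nonneg (|P i j| - 1/2)]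
  rcases eq_or_lt_of_le hp1 with hp | hp
  · -- p = 1
    have hstep : (∑ i, ∑ j, if i = j then 0 else x i j * |P i j|)
        ≤ (1/2) * ∑ i, ∑ j, if i = j then 0 else x i j := by
      rw [Finset.mul_sum]
      refine Finset.sum_le_sum fun i _ => ?_
      rw [Finset.mul_sum]
      refine Finset.sum_le_sum fun j _ => ?_
      by_cases hij : i = j
      · simp [hij]
      · simp only [if_neg hij]
        calc x i j * |P i j| ≤ x i j * (1/2) :=
              mul_le_mul_of_nonneg_left (hhalf i j hij) (hx i j)
          _ = 1/2 * x i j := by ring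
    have hXrw : (∑ i, ∑ j, if i = j then 0 else (x i j)^p)
        = ∑ i, ∑ j, if i = j then 0 else x i j := by
      refine Finset.sum_congr rfl fun i _ => Finset.sum_congr rfl fun j _ => ?_
      by_cases hij : i = j
      · simp [hij]
      · simp only [if_neg hij, ← hp, Real.rpow_one]
    rw [hXrw]; linarith
  · -- 1 < p
    set q : ℝ := p / (p - 1) with hqdef
    have hpq : p.HolderConjugate q := Real.HolderConjugate.conjExponent hp
    have hp0 : 0 < p := by linarith
    have hq3 : 3 ≤ q := by
      rw [hqdef, le_div_iff₀ (by linarith)]; linarith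
    have hq0 : 0 < q := by linarith
    have hinv : 1/p + 1/q = 1 := by
      have := hpq.inv_add_inv_eq_one
      simpa [one_div] using this
    have hqp : q / p = q - 1 := by
      have h1 : (1:ℝ)/p = 1 - 1/q := by linarith
      calc q / p = q * (1/p) := by ring
        _ = q * (1 - 1/q) := by rw [h1]
        _ = q - q * (1/q) := by ring
        _ = q - 1 := by rw [mul_one_div, div_self (ne_of_gt hq0)]
    set c : n → ℝ := fun i => (P i i) ^ ((q-1)/4) * (1 - P i i) ^ ((q-3)/4) with hcdef
    have hc0 : ∀ i, 0 ≤ c i := fun i =>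
      mul_nonneg (Real.rpow_nonneg (ha0 i) _) (Real.rpow_nonneg (by linarith [hub i]) _)
    -- per-term bound
    have hterm : ∀ i j, i ≠ j → |P i j| ^ q ≤ (P i j)^2 * (c i * c j) := by
      intro i j hij
      by_cases h0 : P i j = 0
      · rw [h0]; simp only [abs_zero]
        rw [Real.zero_rpow (by linarith)]
        exact mul_nonneg (sq_nonneg _) (mul_nonneg (hc0 i) (hc0 j))
      · have habs : 0 < |P i j| := abs_pos.mpr h0
        have hsq : |P i j| ^ (2:ℝ) = (P i j)^2 := by
          rw [show (2:ℝ) = ((2:ℕ):ℝ) by norm_num, Real.rpow_natCast, sq_abs]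
        have e1 : |P i j| ^ q
            = (P i j)^2 * ((P i j)^2) ^ ((q-1)/4) * ((P i j)^2) ^ ((q-3)/4) := by
          rw [← hsq, ← Real.rpow_mul habs.le, ← Real.rpow_mul habs.le, ← Real.rpow_add habs,
            ← Real.rpow_add habs]
          congr 1; ring
        have b1 : ((P i j)^2) ^ ((q-1)/4) ≤ (P i i * P j j) ^ ((q-1)/4) :=
          Real.rpow_le_rpow (sq_nonneg _) (hcs i j) (by linarith)
        have b2 : ((P i j)^2) ^ ((q-3)/4) ≤ ((1 - P i i) * (1 - P j j)) ^ ((q-3)/4) :=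
          Real.rpow_le_rpow (sq_nonneg _) (hcs' i j hij) (by linarith)
        have m1 : (P i i * P j j) ^ ((q-1)/4)
            = (P i i) ^ ((q-1)/4) * (P j j) ^ ((q-1)/4) :=
          Real.mul_rpow (ha0 i) (ha0 j)
        have m2 : ((1 - P i i) * (1 - P j j)) ^ ((q-3)/4)
            = (1 - P i i) ^ ((q-3)/4) * (1 - P j j) ^ ((q-3)/4) :=
          Real.mul_rpow (by linarith [hub i]) (by linarith [hub j])
        calc |P i j| ^ q
            = (P i j)^2 * ((P i j)^2) ^ ((q-1)/4) * ((P i j)^2) ^ ((q-3)/4) := e1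
          _ ≤ (P i j)^2 * ((P i i * P j j) ^ ((q-1)/4)) * (((1 - P i i) * (1 - P j j)) ^ ((q-3)/4)) := by
              have g1 : 0 ≤ ((P i j)^2) ^ ((q-3)/4) := Real.rpow_nonneg (sq_nonneg _) _
              have g2 : 0 ≤ (P i j)^2 * ((P i i * P j j) ^ ((q-1)/4)) :=
                mul_nonneg (sq_nonneg _) (Real.rpow_nonneg (mul_nonneg (ha0 i) (ha0 j)) _)
              exact mul_le_mul (mul_le_mul_of_nonneg_left b1 (sq_nonneg _)) b2 g1 g2
          _ = (P i j)^2 * (c i * c j) := by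
              rw [m1, m2, hcdef]; ring
    -- sum bound on Y
    set Y : ℝ := ∑ i, ∑ j, if i = j then 0 else |P i j| ^ q with hYdef
    have hY0 : 0 ≤ Y := by
      refine Finset.sum_nonneg fun i _ => Finset.sum_nonneg fun j _ => ?_
      by_cases hij : i = j
      · simp [hij]
      · simp only [if_neg hij]; exact Real.rpow_nonneg (abs_nonneg _) _
    have hT2 : (∑ i, ∑ j, if i = j then 0 else (P i j)^2 * (c j)^2)
        = ∑ i, ∑ j, if i = j then 0 else (P i j)^2 * (c i)^2 := by
      rw [Finset.sum_comm]
      refine Finset.sum_congr rfl fun i _ => Finset.sum_congr rfl fun j _ => ?_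
      by_cases hij : i = j
      · subst hij; simp
      · rw [if_neg (fun h => hij h.symm), if_neg hij, hsym j i]
    have hY1 : Y ≤ ∑ i, (c i)^2 * (P i i - (P i i)^2) := by
      have step : Y ≤ ∑ i, ∑ j, if i = j then 0 else
          ((P i j)^2 * (c i)^2 + (P i j)^2 * (c j)^2)/2 := by
        refine Finset.sum_le_sum fun i _ => Finset.sum_le_sum fun j _ => ?_
        by_cases hij : i = j
        · simp [hij]
        · simp only [if_neg hij]
          have h1 := hterm i j hij
          have h2 : c i * c j ≤ ((c i)^2 + (c j)^2)/2 := by nlinarith [sq_nonneg (c i - c j)]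
          calc |P i j| ^ q ≤ (P i j)^2 * (c i * c j) := h1
            _ ≤ (P i j)^2 * (((c i)^2 + (c j)^2)/2) :=
                mul_le_mul_of_nonneg_left h2 (sq_nonneg _)
            _ = ((P i j)^2 * (c i)^2 + (P i j)^2 * (c j)^2)/2 := by ring
      have split : (∑ i, ∑ j, if i = j then 0 else
            ((P i j)^2 * (c i)^2 + (P i j)^2 * (c j)^2)/2)
          = ((∑ i, ∑ j, if i = j then 0 else (P i j)^2 * (c i)^2)
            + (∑ i, ∑ j, if i = j then 0 else (P i j)^2 * (c j)^2))/2 := by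
        have hinner : ∀ i, (∑ j, if i = j then 0 else
              ((P i j)^2 * (c i)^2 + (P i j)^2 * (c j)^2)/2)
            = ((∑ j, if i = j then 0 else (P i j)^2 * (c i)^2)
              + ∑ j, if i = j then 0 else (P i j)^2 * (c j)^2)/2 := by
          intro i
          calc (∑ j, if i = j then 0 else ((P i j)^2*(c i)^2 + (P i j)^2*(c j)^2)/2)
              = ∑ j, ((if i = j then 0 else (P i j)^2*(c i)^2)
                + (if i = j then 0 else (P i j)^2*(c j)^2))/2 :=
                Finset.sum_congr rfl fun j _ => by by_cases hij : i = j <;> simp [hij]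
            _ = _ := by rw [← Finset.sum_div, Finset.sum_add_distrib]
        simp only [hinner]
        rw [← Finset.sum_div, Finset.sum_add_distrib]
      have diag : (∑ i, ∑ j, if i = j then 0 else (P i j)^2 * (c i)^2)
          = ∑ i, (c i)^2 * (P i i - (P i i)^2) := by
        refine Finset.sum_congr rfl fun i _ => ?_
        have hrw : ∀ j, (if i = j then 0 else (P i j)^2 * (c i)^2)
            = (if i = j then 0 else (P i j)^2) * (c i)^2 := by
          intro j; by_cases hij : i = j <;> simp [hij]
        simp only [hrw]
        rw [← Finset.sum_mul, hoff i, mul_comm]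
      rw [split, hT2, diag] at step
      linarith
    have hstep5 : ∀ i, (c i)^2 * (P i i - (P i i)^2) ≤ 2^(1-q) * P i i := by
      intro i
      have h2q0 : (0:ℝ) ≤ 2^(1-q) := (Real.rpow_pos_of_pos two_pos _).le
      by_cases ha1 : P i i = 1
      · have hz : (c i)^2 * (P i i - (P i i)^2) = 0 := by rw [ha1]; ring
        rw [hz, ha1, mul_one]; exact h2q0
      by_cases haz : P i i = 0
      · have hz : (c i)^2 * (P i i - (P i i)^2) = 0 := by rw [haz]; ring
        rw [hz, haz, mul_zero]
      have hA0 : 0 < P i i := lt_of_le_of_ne (ha0 i) (Ne.symm haz)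
      have hA1 : P i i < 1 := lt_of_le_of_ne (hub i) ha1
      have hB0 : 0 < 1 - P i i := by linarith
      have hc2 : (c i)^2 = (P i i) ^ ((q-1)/2) * (1 - P i i) ^ ((q-3)/2) := by
        rw [hcdef]
        rw [mul_pow, ← Real.rpow_natCast ((P i i) ^ ((q-1)/4)) 2,
          ← Real.rpow_natCast ((1 - P i i) ^ ((q-3)/4)) 2,
          ← Real.rpow_mul hA0.le, ← Real.rpow_mul hB0.le]
        norm_num
        rw [show (q-1)/4*(2:ℝ) = (q-1)/2 by ring, show (q-3)/4*(2:ℝ) = (q-3)/2 by ring]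
      have key : (c i)^2 * (P i i - (P i i)^2)
          = P i i * ((P i i * (1 - P i i)) ^ ((q-1)/2)) := by
        have e2 : (1 - P i i) ^ ((q-3)/2 + 1)
            = (1 - P i i) ^ ((q-3)/2) * (1 - P i i) := by
          rw [Real.rpow_add hB0, Real.rpow_one]
        calc (c i)^2 * (P i i - (P i i)^2)
            = P i i * ((P i i) ^ ((q-1)/2) * ((1 - P i i) ^ ((q-3)/2) * (1 - P i i))) := by
              rw [hc2]; ring
          _ = P i i * ((P i i) ^ ((q-1)/2) * (1 - P i i) ^ ((q-3)/2 + 1)) := by rw [e2]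
          _ = P i i * ((P i i) ^ ((q-1)/2) * (1 - P i i) ^ ((q-1)/2)) := by
              rw [show (q-3)/2+1 = (q-1)/2 by ring]
          _ = P i i * ((P i i * (1 - P i i)) ^ ((q-1)/2)) := by
              rw [Real.mul_rpow hA0.le hB0.le]
      rw [key]
      have hq14 : P i i * (1 - P i i) ≤ 1/4 := by nlinarith [sq_nonneg (P i i - 1/2)]
      have hmono : (P i i * (1 - P i i)) ^ ((q-1)/2) ≤ (1/4 : ℝ) ^ ((q-1)/2) :=
        Real.rpow_le_rpow (mul_nonneg hA0.le hB0.le) hq14 (by linarith)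
      have h14 : ((1:ℝ)/4) ^ ((q-1)/2) = 2^(1-q) := by
        have h2 : ((1:ℝ)/4) = (2:ℝ) ^ (-2:ℝ) := by
          rw [show (-2:ℝ) = ((-2 : ℤ) : ℝ) by norm_num, Real.rpow_intCast]
          norm_num
        rw [h2, ← Real.rpow_mul (by norm_num : (0:ℝ) ≤ 2)]
        congr 1; ring
      calc P i i * ((P i i * (1 - P i i)) ^ ((q-1)/2))
          ≤ P i i * ((1/4:ℝ) ^ ((q-1)/2)) := mul_le_mul_of_nonneg_left hmono hA0.le
        _ = 2^(1-q) * P i i := by rw [h14]; ring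
    have hYB : Y ≤ 2^(1-q) * M := by
      calc Y ≤ ∑ i, (c i)^2 * (P i i - (P i i)^2) := hY1
        _ ≤ ∑ i, 2^(1-q) * P i i := Finset.sum_le_sum fun i _ => hstep5 i
        _ = 2^(1-q) * M := by rw [← Finset.mul_sum, htr]
    -- Young's inequality with scaling
    set X : ℝ := ∑ i, ∑ j, if i = j then 0 else (x i j) ^ p with hXdef
    have hyoung : ∀ i j, i ≠ j →
        x i j * |P i j| ≤ (x i j)^p / (2*p) + 2^(q-1) * |P i j|^q / q := by
      intro i j hij
      have hs0 : (0:ℝ) ≤ (2:ℝ) ^ (-(1/p)) := (Real.rpow_pos_of_pos two_pos _).le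
      have ht0 : (0:ℝ) ≤ (2:ℝ) ^ (1/p) := (Real.rpow_pos_of_pos two_pos _).le
      have h := Real.young_inequality_of_nonneg
        (mul_nonneg (hx i j) hs0) (mul_nonneg (abs_nonneg (P i j)) ht0) hpq
      have hl : (x i j * 2 ^ (-(1/p))) * (|P i j| * 2 ^ (1/p)) = x i j * |P i j| := by
        rw [show (x i j * 2 ^ (-(1/p))) * (|P i j| * 2 ^ (1/p))
            = x i j * |P i j| * ((2:ℝ) ^ (-(1/p)) * 2 ^ (1/p)) by ring,
          ← Real.rpow_add two_pos]
        norm_num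
      have hr1 : (x i j * 2 ^ (-(1/p))) ^ p = (x i j)^p * (1/2) := by
        rw [Real.mul_rpow (hx i j) hs0, ← Real.rpow_mul (by norm_num : (0:ℝ) ≤ 2)]
        congr 1
        rw [show -(1/p) * p = -1 by field_simp, show (-1:ℝ) = ((-1:ℤ):ℝ) by norm_num,
          Real.rpow_intCast]
        norm_num
      have hr2 : (|P i j| * 2 ^ (1/p)) ^ q = |P i j|^q * 2^(q-1) := by
        rw [Real.mul_rpow (abs_nonneg _) ht0, ← Real.rpow_mul (by norm_num : (0:ℝ) ≤ 2)]
        congr 1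
        rw [show 1/p * q = q/p by ring, hqp]
      rw [hl, hr1, hr2] at h
      calc x i j * |P i j| ≤ (x i j)^p * (1/2) / p + |P i j|^q * 2^(q-1) / q := h
        _ = (x i j)^p / (2*p) + 2^(q-1) * |P i j|^q / q := by ring
    have hsum2 : M ≤ X / (2*p) + 2^(q-1) * Y / q := by
      refine le_trans hxy ?_
      have hperm : (∑ i, ∑ j, if i = j then 0 else x i j * |P i j|)
          ≤ ∑ i, ∑ j, ((if i = j then 0 else (x i j)^p) / (2*p)
            + 2^(q-1) * (if i = j then 0 else |P i j|^q) / q) := by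
        refine Finset.sum_le_sum fun i _ => Finset.sum_le_sum fun j _ => ?_
        by_cases hij : i = j
        · simp [hij]
        · simp only [if_neg hij]
          exact hyoung i j hij
      refine le_trans hperm (le_of_eq ?_)
      rw [hXdef, hYdef]
      simp only [Finset.sum_add_distrib, ← Finset.sum_div, ← Finset.mul_sum]
    have hcancel : (2:ℝ)^(q-1) * (2^(1-q) * M) = M := by
      rw [← mul_assoc, ← Real.rpow_add two_pos, show q-1+(1-q) = 0 by ring,
        Real.rpow_zero, one_mul]
    have h2q0 : (0:ℝ) < 2^(q-1) := Real.rpow_pos_of_pos two_pos _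
    have hsum3 : M ≤ X / (2*p) + M / q := by
      have hh : 2^(q-1) * Y / q ≤ M / q := by
        have h1 : 2^(q-1) * Y ≤ M := by
          have := mul_le_mul_of_nonneg_left hYB h2q0.le
          rwa [hcancel] at this
        exact (div_le_div_iff_of_pos_right hq0).mpr h1
      linarith
    have hfin : M / p ≤ X / (2*p) := by
      have hMq : M / p = M - M / q := by
        rw [div_eq_mul_one_div M p, show (1:ℝ)/p = 1 - 1/q by linarith]
        ring
      linarith
    have hfin2 := (div_le_div_iff₀ hp0 (by linarith : (0:ℝ) < 2*p)).mp hfin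
    nlinarith [hfin2, hp0]

open Finset in
set_option maxHeartbeats 1000000 in
/-- For `1 ≤ m < d`, `p ∈ [1, p_m]` with `p_m = 2 log((2m+1)/(2m)) / log((m+1)/m)`, and any
real `(d+m) × (d+m)` matrix `A` of rank `d` with unit diagonal entries, `E_p(A) ≥ 2m`. -/
theorem pFrameEnergy_d_plus_m (d m : ℕ) (hd : 2 ≤ d) (hm : 1 ≤ m) (hmd : m < d)
    (p : ℝ) (hp1 : 1 ≤ p)
    (hp2 : p ≤ 2 * Real.log ((2 * (m : ℝ) + 1) / (2 * (m : ℝ))) /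
        Real.log (((m : ℝ) + 1) / (m : ℝ)))
    (A : Matrix (Fin (d + m)) (Fin (d + m)) ℝ) (hrank : A.rank = d)
    (hdiag : ∀ i, A i i = 1) :
    2 * (m : ℝ) ≤ ∑ i, ∑ j, if i = j then 0 else |A i j| ^ p := by
  classical
  -- Step 1: p ≤ 3/2
  have hp32 : p ≤ 3/2 := by
    refine le_trans hp2 ?_
    have hm1 : (1:ℝ) ≤ (m:ℝ) := by exact_mod_cast hm
    have hm0 : (0:ℝ) < m := by linarith
    have hb2 : (1:ℝ) < ((m:ℝ)+1)/m := by
      rw [lt_div_iff₀ hm0]; linarith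
    have hL2 : 0 < Real.log (((m:ℝ)+1)/m) := Real.log_pos hb2
    rw [div_le_iff₀ hL2]
    have h16 : 0 ≤ 16*(m:ℝ)^3 + 24*(m:ℝ)^2 + 8*(m:ℝ) - 1 := by nlinarith
    have key : ((2*(m:ℝ)+1)/(2*m))^(4:ℕ) ≤ (((m:ℝ)+1)/m)^(3:ℕ) := by
      rw [div_pow, div_pow, div_le_div_iff₀ (by positivity) (by positivity)]
      nlinarith [h16, pow_pos hm0 3, hm0]
    have hlog := Real.log_le_log (by positivity) key
    rw [Real.log_pow, Real.log_pow] at hlog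
    push_cast at hlog
    linarith
  -- Step 2: the orthogonal projection onto the kernel
  let K : Submodule ℝ (EuclideanSpace ℝ (Fin (d + m))) :=
    (LinearMap.ker A.mulVecLin).map
      ((WithLp.linearEquiv 2 ℝ (Fin (d + m) → ℝ)).symm.toLinearMap)
  have hKmem : ∀ v : EuclideanSpace ℝ (Fin (d + m)), v ∈ K ↔ A.mulVec v = 0 := by
    intro v
    constructor
    · rintro ⟨w, hw, rfl⟩
      simpa [Matrix.mulVecLin_apply] using hw
    · intro hv
      exact ⟨v, by simpa [Matrix.mulVecLin_apply] using hv, rfl⟩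
  have hKfin : Module.finrank ℝ K = m := by
    have h := LinearMap.finrank_range_add_finrank_ker A.mulVecLin
    rw [Module.finrank_pi ℝ] at h
    have hr : Module.finrank ℝ (LinearMap.range A.mulVecLin) = d := hrank
    have hmapeq : Module.finrank ℝ K
        = Module.finrank ℝ (LinearMap.ker A.mulVecLin) :=
      LinearEquiv.finrank_map_eq ((WithLp.linearEquiv 2 ℝ (Fin (d + m) → ℝ)).symm) _
    rw [hmapeq]
    simp only [Fintype.card_fin] at h
    omega
  let e : Fin (d + m) → EuclideanSpace ℝ (Fin (d + m)) := fun i => EuclideanSpace.single i 1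
  let Pr : Fin (d + m) → Fin (d + m) → ℝ :=
    fun i j => ((K.orthogonalProjectionOnto (e j)) : EuclideanSpace ℝ (Fin (d + m))) i
  have hcoord : ∀ (v : EuclideanSpace ℝ (Fin (d + m))) (i : Fin (d + m)),
      (inner ℝ (e i) v : ℝ) = v i := by
    intro v i
    rw [show e i = EuclideanSpace.single i (1:ℝ) from rfl, EuclideanSpace.inner_single_left]
    simp
  have hPinner : ∀ u v : EuclideanSpace ℝ (Fin (d + m)),
      (inner ℝ ((K.orthogonalProjectionOnto u : EuclideanSpace ℝ (Fin (d + m))))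
        ((K.orthogonalProjectionOnto v : EuclideanSpace ℝ (Fin (d + m)))) : ℝ)
      = inner ℝ u ((K.orthogonalProjectionOnto v : EuclideanSpace ℝ (Fin (d + m)))) := by
    intro u v
    have h := Submodule.starProjection_inner_eq_zero (K := K) u
      ((K.orthogonalProjectionOnto v : EuclideanSpace ℝ (Fin (d + m)))) (Submodule.coe_mem _)
    rw [Submodule.starProjection_apply] at h
    rw [inner_sub_left] at h
    linarith [h]
  have hPr_inner : ∀ i j, Pr i j
      = (inner ℝ (e i) ((K.orthogonalProjectionOnto (e j)) : EuclideanSpace ℝ (Fin (d + m))) : ℝ) := by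
    intro i j
    rw [hcoord]
  have hsym : ∀ i j, Pr i j = Pr j i := by
    intro i j
    rw [hPr_inner, hPr_inner]
    rw [← (show (inner ℝ ((K.orthogonalProjectionOnto (e i)) : EuclideanSpace ℝ (Fin (d + m))) (e j) : ℝ) = inner ℝ (e i) ((K.orthogonalProjectionOnto (e j)) : EuclideanSpace ℝ (Fin (d + m))) from Submodule.inner_starProjection_left_eq_right K (e i) (e j))]
    exact real_inner_comm _ _
  have hPP : ∀ i j, Pr i j = (inner ℝ ((K.orthogonalProjectionOnto (e i)) : EuclideanSpace ℝ (Fin (d + m)))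
      ((K.orthogonalProjectionOnto (e j)) : EuclideanSpace ℝ (Fin (d + m))) : ℝ) := by
    intro i j
    rw [hPr_inner, hPinner]
  have hrow : ∀ i, ∑ j, (Pr i j)^2 = Pr i i := by
    intro i
    have h1 : ∀ j, Pr i j = ((K.orthogonalProjectionOnto (e i)) : EuclideanSpace ℝ (Fin (d + m))) j := by
      intro j; rw [hsym i j]
    have h2 : (inner ℝ ((K.orthogonalProjectionOnto (e i)) : EuclideanSpace ℝ (Fin (d + m)))
        ((K.orthogonalProjectionOnto (e i)) : EuclideanSpace ℝ (Fin (d + m))) : ℝ)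
        = ∑ j, (((K.orthogonalProjectionOnto (e i)) : EuclideanSpace ℝ (Fin (d + m))) j)^2 := by
      rw [PiLp.inner_apply]
      refine Finset.sum_congr rfl fun j _ => ?_
      simp [sq]
    calc ∑ j, (Pr i j)^2
        = ∑ j, (((K.orthogonalProjectionOnto (e i)) : EuclideanSpace ℝ (Fin (d + m))) j)^2 := by
          refine Finset.sum_congr rfl fun j _ => by rw [h1]
      _ = (inner ℝ ((K.orthogonalProjectionOnto (e i)) : EuclideanSpace ℝ (Fin (d + m)))
          ((K.orthogonalProjectionOnto (e i)) : EuclideanSpace ℝ (Fin (d + m))) : ℝ) := h2.symm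
      _ = Pr i i := by rw [← hPP]
  have ha0 : ∀ i, 0 ≤ Pr i i := by
    intro i
    rw [hPP]
    exact real_inner_self_nonneg
  have hcs : ∀ i j, (Pr i j)^2 ≤ Pr i i * Pr j j := by
    intro i j
    rw [hPP i j, hPP i i, hPP j j, sq]
    exact real_inner_mul_inner_self_le _ _
  -- the complementary projection facts
  have hQinner : ∀ i j, (inner ℝ (e i - ((K.orthogonalProjectionOnto (e i)) : EuclideanSpace ℝ (Fin (d + m))))
      (e j - ((K.orthogonalProjectionOnto (e j)) : EuclideanSpace ℝ (Fin (d + m)))) : ℝ)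
      = (if i = j then 1 else 0) - Pr i j := by
    intro i j
    rw [inner_sub_right, inner_sub_left, inner_sub_left]
    have h1 : (inner ℝ ((K.orthogonalProjectionOnto (e i)) : EuclideanSpace ℝ (Fin (d + m)))
        ((K.orthogonalProjectionOnto (e j)) : EuclideanSpace ℝ (Fin (d + m))) : ℝ) = Pr i j := (hPP i j).symm
    have h2 : (inner ℝ ((K.orthogonalProjectionOnto (e i)) : EuclideanSpace ℝ (Fin (d + m))) (e j) : ℝ)
        = Pr i j := by
      rw [(show (inner ℝ ((K.orthogonalProjectionOnto (e i)) : EuclideanSpace ℝ (Fin (d + m))) (e j) : ℝ) = inner ℝ (e i) ((K.orthogonalProjectionOnto (e j)) : EuclideanSpace ℝ (Fin (d + m))) from Submodule.inner_starProjection_left_eq_right K (e i) (e j))]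
      exact (hPr_inner i j).symm
    have h3 : (inner ℝ (e i) ((K.orthogonalProjectionOnto (e j)) : EuclideanSpace ℝ (Fin (d + m))) : ℝ)
        = Pr i j := (hPr_inner i j).symm
    have h4 : (inner ℝ (e i) (e j) : ℝ) = if i = j then 1 else 0 := by
      rw [hcoord (e j) i]
      by_cases hij : i = j
      · simp [hij, e]
      · simp [e, EuclideanSpace.single_apply, hij, Ne.symm hij]
    rw [h1, h2, h3, h4]
    ring
  have hub : ∀ i, Pr i i ≤ 1 := by
    intro i
    have := real_inner_self_nonneg (x := e i - ((K.orthogonalProjectionOnto (e i)) : EuclideanSpace ℝ (Fin (d + m))))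
    rw [hQinner i i] at this
    rw [if_pos rfl] at this
    linarith
  have hcs' : ∀ i j, i ≠ j → (Pr i j)^2 ≤ (1 - Pr i i) * (1 - Pr j j) := by
    intro i j hij
    have h := real_inner_mul_inner_self_le
      (e i - ((K.orthogonalProjectionOnto (e i)) : EuclideanSpace ℝ (Fin (d + m))))
      (e j - ((K.orthogonalProjectionOnto (e j)) : EuclideanSpace ℝ (Fin (d + m))))
    rw [hQinner i j, hQinner i i, hQinner j j, if_neg hij, if_pos rfl, if_pos rfl] at h
    calc (Pr i j)^2 = (0 - Pr i j) * (0 - Pr i j) := by ring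
      _ ≤ (1 - Pr i i) * (1 - Pr j j) := h
  -- trace = m
  have htr : ∑ i, Pr i i = (m:ℝ) := by
    let b := stdOrthonormalBasis ℝ K
    have hdiagPr : ∀ i, Pr i i = ∑ k, ((b k : EuclideanSpace ℝ (Fin (d + m))) i)^2 := by
      intro i
      rw [hPr_inner i i, OrthonormalBasis.orthogonalProjectionOnto_apply_eq_sum b (e i)]
      push_cast [Submodule.coe_sum, Submodule.coe_smul]
      rw [inner_sum]
      refine Finset.sum_congr rfl fun k _ => ?_
      rw [real_inner_smul_right, hcoord]
      have : (inner ℝ ((b k : EuclideanSpace ℝ (Fin (d + m)))) (e i) : ℝ)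
          = (b k : EuclideanSpace ℝ (Fin (d + m))) i := by
        rw [real_inner_comm, hcoord]
      rw [this, sq]
    have hnorm1 : ∀ k, ∑ i, ((b k : EuclideanSpace ℝ (Fin (d + m))) i)^2 = 1 := by
      intro k
      have h1 : (inner ℝ ((b k : EuclideanSpace ℝ (Fin (d + m)))) ((b k : EuclideanSpace ℝ (Fin (d + m)))) : ℝ)
          = 1 := by
        have hn := b.orthonormal.1 k
        have h0 : (inner ℝ (b k) (b k) : ℝ) = 1 := by
          rw [real_inner_self_eq_norm_mul_norm, hn]; norm_num
        exact (Submodule.coe_inner K (b k) (b k)).symm.trans h0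
      rw [← h1, PiLp.inner_apply]
      refine Finset.sum_congr rfl fun i _ => by simp [sq]
    calc ∑ i, Pr i i = ∑ i, ∑ k, ((b k : EuclideanSpace ℝ (Fin (d + m))) i)^2 :=
          Finset.sum_congr rfl fun i _ => hdiagPr i
      _ = ∑ k, ∑ i, ((b k : EuclideanSpace ℝ (Fin (d + m))) i)^2 := Finset.sum_comm
      _ = ∑ k : Fin (Module.finrank ℝ K), (1:ℝ) :=
          Finset.sum_congr rfl fun k _ => hnorm1 k
      _ = (m:ℝ) := by rw [Finset.sum_const, hKfin]; simp
  -- the off-diagonal row sums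
  have hoff : ∀ i, (∑ j, if i = j then 0 else (Pr i j)^2) = Pr i i - (Pr i i)^2 := by
    intro i
    have h1 : ∑ j, (Pr i j)^2
        = (∑ j, if i = j then (Pr i j)^2 else 0) + ∑ j, if i = j then 0 else (Pr i j)^2 := by
      rw [← Finset.sum_add_distrib]
      refine Finset.sum_congr rfl fun j _ => by by_cases hij : i = j <;> simp [hij]
    rw [Finset.sum_ite_eq] at h1
    simp only [Finset.mem_univ, if_pos] at h1
    have := hrow i
    linarith
  -- the main trace inequality
  have hxy : (m:ℝ) ≤ ∑ i, ∑ j, if i = j then 0 else |A i j| * |Pr i j| := by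
    have hAv : ∀ i j, ∑ l, A i l * Pr l j = 0 := by
      intro i j
      have hmem : ((K.orthogonalProjectionOnto (e j)) : EuclideanSpace ℝ (Fin (d + m))) ∈ K :=
        Submodule.coe_mem _
      rw [hKmem] at hmem
      have := congrFun hmem i
      simpa [Matrix.mulVec, dotProduct, Pr] using this
    have hdiagle : ∀ i, Pr i i ≤ ∑ j, if i = j then 0 else |A i j| * |Pr i j| := by
      intro i
      have h0 := hAv i i
      have hsplit : ∑ l, A i l * Pr l i
          = Pr i i + ∑ l, if i = l then 0 else A i l * Pr l i := by
        have : ∀ l, A i l * Pr l i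
            = (if i = l then A i l * Pr l i else 0) + (if i = l then 0 else A i l * Pr l i) := by
          intro l; by_cases hil : i = l <;> simp [hil]
        rw [Finset.sum_congr rfl fun l _ => this l, Finset.sum_add_distrib,
          Finset.sum_ite_eq]
        simp [hdiag i]
      have hPr : Pr i i = ∑ l, if i = l then 0 else -(A i l * Pr l i) := by
        have h2 : (∑ l, if i = l then 0 else -(A i l * Pr l i))
            = - ∑ l, (if i = l then 0 else A i l * Pr l i) := by
          rw [← Finset.sum_neg_distrib]
          exact Finset.sum_congr rfl fun l _ => by by_cases hil : i = l <;> simp [hil]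
        rw [h2]; linarith
      rw [hPr]
      refine Finset.sum_le_sum fun l _ => ?_
      by_cases hil : i = l
      · simp [hil]
      · simp only [if_neg hil]
        calc -(A i l * Pr l i) ≤ |A i l * Pr l i| := neg_le_abs _
          _ = |A i l| * |Pr l i| := abs_mul _ _
          _ = |A i l| * |Pr i l| := by rw [hsym l i]
    calc (m:ℝ) = ∑ i, Pr i i := htr.symm
      _ ≤ ∑ i, ∑ j, if i = j then 0 else |A i j| * |Pr i j| :=
          Finset.sum_le_sum fun i _ => hdiagle i
  -- conclude
  exact key_sum Pr (m:ℝ) hsym hoff ha0 hub hcs hcs' htr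
    (fun i j => |A i j|) (fun i j => abs_nonneg _) hxy p hp1 hp32
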